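/- The choice share map B ↦ π_j^w(B) in the brand ambassador problem is monotone: for X ⊆ Y ⊆ A, π_j^w(X) ≤ π_j^w(Y). -/

import Mathlib

open Matrix Filter Topology
open scoped NNReal ENNReal

/-- `P(B)`: the rows of `P` indexed by the brand-ambassador set `B` are zeroed. -/
def ambP {n : ℕ} (P : Matrix (Fin n) (Fin n) ℝ) (B : Finset (Fin n)) :
    Matrix (Fin n) (Fin n) ℝ :=
  fun i k => if i ∈ B then 0 else P i k

/-- `q⁽ʲ⁾(B)`: entries indexed by `B` are set to 1 (ambassadors pick `j` surely). -/
def ambQ {n m : ℕ} (q : Fin n → Fin m → ℝ) (j : Fin m) (B : Finset (Fin n)) :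
    Fin n → ℝ :=
  fun k => if k ∈ B then 1 else q k j

/-- Choice share of `j` under endowment `w` with ambassador set `B`. -/
noncomputable def ambShare {n m : ℕ} (w : Fin n → ℝ) (P : Matrix (Fin n) (Fin n) ℝ)
    (q : Fin n → Fin m → ℝ) (j : Fin m) (B : Finset (Fin n)) : ℝ :=
  w ⬝ᵥ ((1 - ambP P B)⁻¹ *ᵥ ambQ q j B)


section Analytic
attribute [local instance] Matrix.linftyOpNormedRing Matrix.linftyOpNormedAlgebra

lemma amb_matrix_pow_tendsto_zero {n : ℕ} [Nonempty (Fin n)] (A : Matrix (Fin n) (Fin n) ℝ)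
    (hspec : ∀ μ ∈ spectrum ℂ (A.map (algebraMap ℝ ℂ)), ‖μ‖ < 1) (i l : Fin n) :
    Tendsto (fun k : ℕ => (A ^ k) i l) atTop (𝓝 0) := by
  set Ac : Matrix (Fin n) (Fin n) ℂ := A.map (algebraMap ℝ ℂ) with hAc
  have hρ : spectralRadius ℂ Ac < 1 := by
    have := spectrum.spectralRadius_lt_of_forall_lt (a := Ac) (r := 1) ?_
    · simpa using this
    · intro z hz; simpa [← NNReal.coe_lt_coe, coe_nnnorm] using hspec z hz
  have hnorm : Tendsto (fun k : ℕ => ‖Ac ^ k‖) atTop (𝓝 0) := by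
    obtain ⟨r, hr1, hr2⟩ := exists_between hρ
    have hrtop : r ≠ ⊤ := (hr2.trans (by norm_num)).ne
    have hgel := spectrum.pow_nnnorm_pow_one_div_tendsto_nhds_spectralRadius Ac
    have hev : ∀ᶠ k : ℕ in atTop, (‖Ac ^ k‖₊ : ℝ≥0∞) ^ (1 / (k:ℝ)) < r :=
      hgel.eventually_lt_const hr1
    have hr2' : r.toReal < 1 := by
      rw [← ENNReal.toReal_one]
      exact ENNReal.toReal_strict_mono (by norm_num) hr2
    have key : ∀ᶠ k : ℕ in atTop, ‖Ac ^ k‖ ≤ r.toReal ^ k := by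
      filter_upwards [hev, eventually_ge_atTop 1] with k hk hk1
      have hkne : (k : ℝ) ≠ 0 := Nat.cast_ne_zero.mpr (by omega)
      have : ((‖Ac ^ k‖₊ : ℝ≥0∞) ^ (1 / (k:ℝ))) ^ (k : ℝ) ≤ r ^ (k : ℝ) :=
        ENNReal.rpow_le_rpow hk.le (by positivity)
      rw [← ENNReal.rpow_mul, one_div,
        inv_mul_cancel₀ hkne, ENNReal.rpow_one, ENNReal.rpow_natCast] at this
      have := ENNReal.toReal_mono (by simp [hrtop]) this
      simpa [ENNReal.toReal_pow, ← coe_nnnorm] using this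
    exact squeeze_zero' (.of_forall fun k => norm_nonneg _)
      key (tendsto_pow_atTop_nhds_zero_of_lt_one ENNReal.toReal_nonneg hr2')
  have hmap : ∀ k : ℕ, Ac ^ k = (A ^ k).map (algebraMap ℝ ℂ) := by
    intro k
    have : Ac = (algebraMap ℝ ℂ).mapMatrix A := rfl
    rw [this, ← map_pow]; rfl
  have hb : ∀ k : ℕ, ‖(A ^ k) i l‖ ≤ ‖Ac ^ k‖ := by
    intro k
    have h1 : ‖(Ac ^ k) i l‖ ≤ ‖Ac ^ k‖ := by
      have := Matrix.linfty_opNNNorm_def (Ac ^ k)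
      have h2 : ‖(Ac ^ k) i l‖₊ ≤ ∑ t, ‖(Ac ^ k) i t‖₊ :=
        Finset.single_le_sum (f := fun t => ‖(Ac ^ k) i t‖₊) (fun t _ => zero_le) (Finset.mem_univ l)
      have h3 : (∑ t, ‖(Ac ^ k) i t‖₊) ≤ ‖Ac ^ k‖₊ := by
        rw [this]; exact Finset.le_sup (f := fun r => ∑ t, ‖(Ac ^ k) r t‖₊) (Finset.mem_univ i)
      exact_mod_cast h2.trans h3
    have : (Ac ^ k) i l = ((A ^ k) i l : ℂ) := by rw [hmap k]; rfl
    rw [this] at h1; simpa using h1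
  exact squeeze_zero_norm hb hnorm

end Analytic

lemma amb_pow_nonneg {n : ℕ} {M : Matrix (Fin n) (Fin n) ℝ}
    (h0 : ∀ i l, 0 ≤ M i l) : ∀ (k : ℕ) i l, 0 ≤ (M ^ k) i l := by
  intro k
  induction k with
  | zero => intro i l; rw [pow_zero, Matrix.one_apply]; split <;> norm_num
  | succ k ih =>
    intro i l
    rw [pow_succ, Matrix.mul_apply]
    exact Finset.sum_nonneg fun t _ => mul_nonneg (ih i t) (h0 t l)

/-- Entrywise: 0 ≤ M^k ≤ P^k when 0 ≤ M ≤ P entrywise. -/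
lemma amb_pow_le {n : ℕ} {M P : Matrix (Fin n) (Fin n) ℝ}
    (h0 : ∀ i l, 0 ≤ M i l) (h1 : ∀ i l, M i l ≤ P i l) (hP : ∀ i l, 0 ≤ P i l) :
    ∀ (k : ℕ) i l, 0 ≤ (M ^ k) i l ∧ (M ^ k) i l ≤ (P ^ k) i l := by
  intro k
  induction k with
  | zero => intro i l; rw [pow_zero]; refine ⟨?_, le_refl _⟩; rw [Matrix.one_apply]; split <;> norm_num
  | succ k ih =>
    intro i l
    rw [pow_succ, pow_succ, Matrix.mul_apply, Matrix.mul_apply]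
    refine ⟨Finset.sum_nonneg fun t _ => mul_nonneg (ih i t).1 (h0 t l), ?_⟩
    exact Finset.sum_le_sum fun t _ =>
      mul_le_mul (ih i t).2 (h1 t l) (h0 t l) (amb_pow_nonneg hP k i t)

/-- The choice share `B ↦ π_j^w(B)` of the brand ambassador
problem is monotone: `X ⊆ Y → π_j^w(X) ≤ π_j^w(Y)`. -/
theorem ambassador_share_monotone {n m : ℕ}
    (P : Matrix (Fin n) (Fin n) ℝ) (q : Fin n → Fin m → ℝ) (j : Fin m)
    (w : Fin n → ℝ)
    (hP : ∀ i k, 0 ≤ P i k) (hdiag : ∀ i, P i i = 0)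
    (hq : ∀ i l, 0 ≤ q i l)
    (hrow : ∀ i, (∑ k, P i k) + (∑ l, q i l) = 1)
    (hspec : ∀ μ ∈ spectrum ℂ (P.map (algebraMap ℝ ℂ)), ‖μ‖ < 1)
    (hw : ∀ i, 0 ≤ w i)
    (X Y : Finset (Fin n)) (hXY : X ⊆ Y) :
    ambShare w P q j X ≤ ambShare w P q j Y := by
  rcases Nat.eq_zero_or_pos n with hn | hn
  · subst hn; simp [ambShare, dotProduct]
  haveI : Nonempty (Fin n) := ⟨⟨0, hn⟩⟩
  -- basic entrywise facts about ambP/ambQ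
  have hM0 : ∀ B (i l : Fin n), 0 ≤ ambP P B i l := by
    intro B i l; unfold ambP; split <;> [rfl; exact hP i l]
  have hMP : ∀ B (i l : Fin n), ambP P B i l ≤ P i l := by
    intro B i l; unfold ambP; split <;> [exact hP i l; rfl]
  have hq01 : ∀ B (i : Fin n), 0 ≤ ambQ q j B i := by
    intro B i; unfold ambQ; split <;> [norm_num; exact hq i j]
  have hrowB : ∀ B (i : Fin n), (∑ l, ambP P B i l) + ambQ q j B i ≤ 1 := by
    intro B i
    unfold ambP ambQ
    by_cases hi : i ∈ B
    · simp [hi]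
    · simp only [hi, if_neg, if_false]
      have : q i j ≤ ∑ l, q i l :=
        Finset.single_le_sum (f := fun l => q i l) (fun l _ => hq i l) (Finset.mem_univ j)
      linarith [hrow i]
  -- powers of ambP tend to zero entrywise
  have hpow0 : ∀ B (i l : Fin n),
      Tendsto (fun k : ℕ => ((ambP P B) ^ k) i l) atTop (𝓝 0) := by
    intro B i l
    have hb := amb_pow_le (hM0 B) (hMP B) hP
    refine squeeze_zero (fun k => (hb k i l).1) (fun k => (hb k i l).2) ?_
    exact amb_matrix_pow_tendsto_zero P hspec i l
  -- (ambP P B)^k *ᵥ v tends to 0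
  have hmv0 : ∀ B (v : Fin n → ℝ) (i : Fin n),
      Tendsto (fun k : ℕ => (((ambP P B) ^ k) *ᵥ v) i) atTop (𝓝 0) := by
    intro B v i
    have : ∀ k, (((ambP P B) ^ k) *ᵥ v) i = ∑ l, ((ambP P B) ^ k) i l * v l := fun k => rfl
    simp only [this]
    have := tendsto_finset_sum (Finset.univ : Finset (Fin n))
      (fun l _ => (hpow0 B i l).mul_const (v l))
    simpa using this
  -- invertibility
  have hdet : ∀ B, (1 - ambP P B).det ≠ 0 := by
    intro B hd
    obtain ⟨v, hv, hv0⟩ := (Matrix.exists_mulVec_eq_zero_iff).2 hd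
    have hfix : ambP P B *ᵥ v = v := by
      have := hv0
      rw [Matrix.sub_mulVec, Matrix.one_mulVec, sub_eq_zero] at this
      exact this.symm
    have hfixk : ∀ k : ℕ, ((ambP P B) ^ k) *ᵥ v = v := by
      intro k; induction k with
      | zero => simp [Matrix.one_mulVec]
      | succ k ih => rw [pow_succ', ← Matrix.mulVec_mulVec, ih, hfix]
    have : ∀ i, v i = 0 := by
      intro i
      have h1 : Tendsto (fun k : ℕ => (((ambP P B) ^ k) *ᵥ v) i) atTop (𝓝 (v i)) := by
        simp only [hfixk]; exact tendsto_const_nhds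
      exact tendsto_nhds_unique h1 (hmv0 B v i)
    exact hv (funext this)
  -- fixed point map
  set f : Finset (Fin n) → (Fin n → ℝ) → (Fin n → ℝ) :=
    fun B v => ambP P B *ᵥ v + ambQ q j B with hfdef
  set x : Finset (Fin n) → (Fin n → ℝ) :=
    fun B => (1 - ambP P B)⁻¹ *ᵥ ambQ q j B with hxdef
  have hfix : ∀ B, f B (x B) = x B := by
    intro B
    have h1 : (1 - ambP P B) *ᵥ x B = ambQ q j B := by
      rw [hxdef]
      dsimp only
      rw [Matrix.mulVec_mulVec, Matrix.mul_nonsing_inv _ (isUnit_iff_ne_zero.mpr (hdet B)), Matrix.one_mulVec]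
    rw [Matrix.sub_mulVec, Matrix.one_mulVec] at h1
    show ambP P B *ᵥ x B + ambQ q j B = x B
    rw [← h1]; abel
  -- iterates
  set s : Finset (Fin n) → ℕ → (Fin n → ℝ) := fun B k => (f B)^[k] 0 with hsdef
  have hs_succ : ∀ B k, s B (k+1) = f B (s B k) := by
    intro B k; rw [hsdef]; dsimp only; rw [Function.iterate_succ_apply']
  have claim1 : ∀ B k (i : Fin n), 0 ≤ s B k i ∧ s B k i ≤ 1 := by
    intro B k
    induction k with
    | zero => intro i; simp [hsdef]
    | succ k ih =>
      intro i
      rw [hs_succ]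
      show 0 ≤ (ambP P B *ᵥ s B k) i + ambQ q j B i ∧ _
      have hmv : (ambP P B *ᵥ s B k) i = ∑ l, ambP P B i l * s B k l := rfl
      constructor
      · refine add_nonneg ?_ (hq01 B i)
        rw [hmv]
        exact Finset.sum_nonneg fun l _ => mul_nonneg (hM0 B i l) (ih l).1
      · have h2 : (ambP P B *ᵥ s B k) i ≤ ∑ l, ambP P B i l := by
          rw [hmv]
          refine Finset.sum_le_sum fun l _ => ?_
          nlinarith [(ih l).1, (ih l).2, hM0 B i l]
        have := hrowB B i
        show (ambP P B *ᵥ s B k) i + ambQ q j B i ≤ 1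
        linarith
  have claim2 : ∀ k (i : Fin n), s X k i ≤ s Y k i := by
    intro k
    induction k with
    | zero => intro i; simp [hsdef]
    | succ k ih =>
      intro i
      rw [hs_succ, hs_succ]
      show (ambP P X *ᵥ s X k) i + ambQ q j X i ≤ (ambP P Y *ᵥ s Y k) i + ambQ q j Y i
      by_cases hi : i ∈ Y
      · have hr : (ambP P Y *ᵥ s Y k) i = 0 := by
          show (∑ l, ambP P Y i l * s Y k l) = 0
          refine Finset.sum_eq_zero fun l _ => ?_
          unfold ambP; rw [if_pos hi, zero_mul]
        have hqY : ambQ q j Y i = 1 := by unfold ambQ; rw [if_pos hi]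
        rw [hr, hqY, zero_add]
        have h1 := (claim1 X (k+1) i).2
        rw [hs_succ] at h1
        exact h1
      · have hiX : i ∉ X := fun h => hi (hXY h)
        have hqe : ambQ q j X i = ambQ q j Y i := by
          unfold ambQ; rw [if_neg (by simpa using hiX), if_neg (by simpa using hi)]
        have hPe : ∀ l, ambP P X i l = ambP P Y i l := by
          intro l; unfold ambP; rw [if_neg (by simpa using hiX), if_neg (by simpa using hi)]
        have : (ambP P X *ᵥ s X k) i ≤ (ambP P Y *ᵥ s Y k) i := by
          show (∑ l, ambP P X i l * s X k l) ≤ ∑ l, ambP P Y i l * s Y k l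
          refine Finset.sum_le_sum fun l _ => ?_
          rw [hPe l]
          exact mul_le_mul_of_nonneg_left (ih l) (hM0 Y i l)
        linarith [le_of_eq hqe]
  have claim3 : ∀ B k, x B - s B k = ((ambP P B) ^ k) *ᵥ x B := by
    intro B k
    induction k with
    | zero => simp [hsdef, Matrix.one_mulVec]
    | succ k ih =>
      rw [hs_succ]
      have : x B - f B (s B k) = ambP P B *ᵥ (x B - s B k) := by
        conv_lhs => rw [← hfix B]
        rw [hfdef]
        dsimp only
        rw [Matrix.mulVec_sub]
        abel
      rw [this, ih, Matrix.mulVec_mulVec, ← pow_succ']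
  have claim4 : ∀ B (i : Fin n), Tendsto (fun k => s B k i) atTop (𝓝 (x B i)) := by
    intro B i
    have h1 : Tendsto (fun k => x B i - (((ambP P B) ^ k) *ᵥ x B) i) atTop (𝓝 (x B i - 0)) :=
      tendsto_const_nhds.sub (hmv0 B (x B) i)
    rw [sub_zero] at h1
    refine h1.congr fun k => ?_
    have := congrFun (claim3 B k) i
    have h2 : x B i - s B k i = (((ambP P B) ^ k) *ᵥ x B) i := this
    linarith
  have claim5 : ∀ i, x X i ≤ x Y i := fun i =>
    le_of_tendsto_of_tendsto' (claim4 X i) (claim4 Y i) fun k => claim2 k i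
  show w ⬝ᵥ x X ≤ w ⬝ᵥ x Y
  exact Finset.sum_le_sum fun i _ => mul_le_mul_of_nonneg_left (claim5 i) (hw i)
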